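/- Let d ≥ 3 and Ω ⊂ ℝ^d be a bounded C^{1,1} domain. Suppose G: Ω × Ω → [0,∞] satisfies G(x,y) ≍ ‖x−y‖^{2−d} · min(1, δ_Ω(x)/‖x−y‖) · min(1, δ_Ω(y)/‖x−y‖). Let F ∈ L^∞(Ω) be nonnegative with F > 0 on a set of positive measure, and set u(x) = ∫_Ω G(x,y)F(y) dy. Then there exists c > 0 such that u(x) ≥ c·δ_Ω(x) for all x ∈ Ω. -/

import Mathlib

open MeasureTheory Set Metric ENNReal

/-- A bounded open set satisfies the two-sided ball condition (equivalent to `C^{1,1}`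
regularity of the boundary). -/
def TwoSidedBallCond {d : ℕ} (Ω : Set (EuclideanSpace ℝ (Fin d))) (r : ℝ) : Prop :=
  0 < r ∧ ∀ x ∈ frontier Ω, ∃ y z : EuclideanSpace ℝ (Fin d),
    Metric.ball y r ⊆ Ω ∧ dist x y = r ∧
    Metric.ball z r ⊆ (closure Ω)ᶜ ∧ dist x z = r

/-- Hopf-type lower bound from Green function estimates: `d ≥ 3`, `Ω ⊂ ℝ^d` a bounded
`C^{1,1}` domain, and `G : Ω × Ω → [0,∞]` two-sidedly comparable to the standard Green
function profile `‖x−y‖^{2−d}·min(1,δ(x)/‖x−y‖)·min(1,δ(y)/‖x−y‖)`. If `F ∈ L^∞(Ω)` is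
nonnegative, measurable, and strictly positive on a set of positive measure, then
`u(x) = ∫_Ω G(x,y)F(y)dy` satisfies `u(x) ≥ c·δ_Ω(x)` on `Ω` for some `c > 0`. -/
theorem stmt15 (d : ℕ) (hd : 3 ≤ d) (Ω : Set (EuclideanSpace ℝ (Fin d)))
    (hΩo : IsOpen Ω) (hΩb : Bornology.IsBounded Ω) (hΩne : Ω.Nonempty)
    (r : ℝ) (hC11 : TwoSidedBallCond Ω r)
    (G : EuclideanSpace ℝ (Fin d) → EuclideanSpace ℝ (Fin d) → ℝ≥0∞)
    (c₁ c₂ : ℝ) (hc₁ : 0 < c₁) (hc₂ : 0 < c₂)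
    (hG : ∀ x ∈ Ω, ∀ y ∈ Ω, x ≠ y →
      ENNReal.ofReal (c₁ * (‖x - y‖ ^ (2 - (d : ℝ))
          * min 1 (infDist x Ωᶜ / ‖x - y‖) * min 1 (infDist y Ωᶜ / ‖x - y‖))) ≤ G x y ∧
      G x y ≤ ENNReal.ofReal (c₂ * (‖x - y‖ ^ (2 - (d : ℝ))
          * min 1 (infDist x Ωᶜ / ‖x - y‖) * min 1 (infDist y Ωᶜ / ‖x - y‖))))
    (F : EuclideanSpace ℝ (Fin d) → ℝ) (hFm : Measurable F)
    (hFnonneg : ∀ y ∈ Ω, 0 ≤ F y) (M : ℝ) (hFbd : ∀ y ∈ Ω, F y ≤ M)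
    (hFpos : 0 < volume {y ∈ Ω | 0 < F y}) :
    ∃ c : ℝ, 0 < c ∧ ∀ x ∈ Ω,
      ENNReal.ofReal (c * infDist x Ωᶜ) ≤ ∫⁻ y in Ω, G x y * ENNReal.ofReal (F y) := by
  classical
  obtain ⟨x₀, hx₀Ω⟩ := hΩne
  obtain ⟨R, hR, hΩR⟩ : ∃ R, 0 < R ∧ Ω ⊆ Metric.ball x₀ R := by
    obtain ⟨R, hΩR⟩ := hΩb.subset_ball x₀
    exact ⟨max R 1, lt_of_lt_of_le one_pos (le_max_right _ _),
      hΩR.trans (Metric.ball_subset_ball (le_max_left _ _))⟩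
  have hd0 : 0 < d := by omega
  -- a point outside Ω at controlled distance
  set z : EuclideanSpace ℝ (Fin d) :=
    x₀ + EuclideanSpace.single (⟨0, hd0⟩ : Fin d) (R + 1) with hzdef
  have hzdist : dist x₀ z = R + 1 := by
    have : dist x₀ z = ‖EuclideanSpace.single (⟨0, hd0⟩ : Fin d) (R + 1)‖ := by
      rw [hzdef, dist_eq_norm]
      simp
    rw [this, EuclideanSpace.norm_single]
    rw [Real.norm_eq_abs, abs_of_pos (by linarith)]
  have hzΩ : z ∈ Ωᶜ := by
    intro hz
    have := Metric.mem_ball.mp (hΩR hz)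
    rw [dist_comm] at this
    rw [hzdist] at this
    linarith
  have hΩcne : (Ωᶜ : Set (EuclideanSpace ℝ (Fin d))).Nonempty := ⟨z, hzΩ⟩
  have hΩcclosed : IsClosed (Ωᶜ : Set (EuclideanSpace ℝ (Fin d))) := hΩo.isClosed_compl
  have hδpos : ∀ x ∈ Ω, 0 < infDist x Ωᶜ := fun x hx =>
    (hΩcclosed.notMem_iff_infDist_pos hΩcne).mp (fun h => h hx)
  set D : ℝ := 2 * R + 1 with hDdef
  have hD : 0 < D := by positivity
  have hδub : ∀ x ∈ Ω, infDist x Ωᶜ ≤ D := by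
    intro x hx
    have h1 := infDist_le_dist_of_mem (x := x) hzΩ
    have h2 := dist_triangle x x₀ z
    have h3 : dist x x₀ < R := Metric.mem_ball.mp (hΩR hx)
    rw [hzdist] at h2
    linarith
  have hdistub : ∀ x ∈ Ω, ∀ y ∈ Ω, ‖x - y‖ ≤ D := by
    intro x hx y hy
    have h1 := dist_triangle x x₀ y
    have h2 : dist x x₀ < R := Metric.mem_ball.mp (hΩR hx)
    have h3 : dist x₀ y < R := by rw [dist_comm]; exact Metric.mem_ball.mp (hΩR hy)
    rw [← dist_eq_norm]
    linarith
  -- find a good compact-ish subset where F and δ are bounded below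
  set S : ℕ → Set (EuclideanSpace ℝ (Fin d)) := fun n =>
    Ω ∩ {y | 1 / (n + 1 : ℝ) ≤ F y ∧ 1 / (n + 1 : ℝ) ≤ infDist y Ωᶜ} with hSdef
  have hSmeas : ∀ n, MeasurableSet (S n) := by
    intro n
    exact hΩo.measurableSet.inter
      ((measurableSet_le measurable_const hFm).inter
        (measurableSet_le measurable_const (measurable_infDist)))
  have hcover : {y ∈ Ω | 0 < F y} ⊆ ⋃ n, S n := by
    rintro y ⟨hy, hFy⟩
    have hδ := hδpos y hy
    obtain ⟨n, hn⟩ := exists_nat_one_div_lt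
      (lt_min_iff.mpr ⟨hFy, hδ⟩ : (0 : ℝ) < min (F y) (infDist y Ωᶜ))
    exact mem_iUnion.mpr ⟨n, hy,
      le_of_lt (lt_of_lt_of_le hn (min_le_left _ _)),
      le_of_lt (lt_of_lt_of_le hn (min_le_right _ _))⟩
  obtain ⟨n, hSn⟩ : ∃ n, 0 < volume (S n) := by
    by_contra h
    push_neg at h
    have h0 : ∀ n, volume (S n) = 0 := fun n => le_antisymm (h n) zero_le
    have : volume {y ∈ Ω | 0 < F y} = 0 :=
      measure_mono_null hcover (measure_iUnion_null_iff.mpr h0)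
    exact hFpos.ne' this
  set η : ℝ := 1 / (n + 1 : ℝ) with hηdef
  have hη : 0 < η := by positivity
  set K : Set (EuclideanSpace ℝ (Fin d)) := S n with hKdef
  have hKsub : K ⊆ Ω := inter_subset_left
  have hKF : ∀ y ∈ K, η ≤ F y := fun y hy => hy.2.1
  have hKδ : ∀ y ∈ K, η ≤ infDist y Ωᶜ := fun y hy => hy.2.2
  have hKmeas : MeasurableSet K := hSmeas n
  have hKfin : volume K < ⊤ :=
    lt_of_le_of_lt (measure_mono (hKsub.trans hΩR)) measure_ball_lt_top
  have hexp : (2 - (d : ℝ)) ≤ 0 := by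
    have : (3 : ℝ) ≤ (d : ℝ) := by exact_mod_cast hd
    linarith
  have hDe : 0 < D ^ (2 - (d : ℝ)) := Real.rpow_pos_of_pos hD _
  set C : ℝ := c₁ * (D ^ (2 - (d : ℝ)) * (1 / D) * min 1 (η / D)) * η with hCdef
  have hminpos : 0 < min 1 (η / D) := lt_min one_pos (by positivity)
  have hC : 0 < C := by
    apply mul_pos (mul_pos hc₁ _) hη
    positivity
  set v : ℝ := (volume K).toReal with hvdef
  have hv : 0 < v := ENNReal.toReal_pos hSn.ne' hKfin.ne
  refine ⟨C * v, by positivity, ?_⟩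
  intro x hx
  set δx : ℝ := infDist x Ωᶜ with hδxdef
  have hδx : 0 < δx := hδpos x hx
  -- pointwise bound
  have hpt : ∀ y, (K \ {x}).indicator (fun _ => ENNReal.ofReal (C * δx)) y ≤
      G x y * ENNReal.ofReal (F y) := by
    intro y
    rcases Classical.em (y ∈ K \ {x}) with hy | hy
    · rw [Set.indicator_of_mem hy]
      obtain ⟨hyK, hyx⟩ := hy
      have hyΩ : y ∈ Ω := hKsub hyK
      have hxy : x ≠ y := fun h => hyx (by simp [h.symm])
      have hnpos : 0 < ‖x - y‖ := by
        rw [norm_pos_iff, sub_ne_zero]; exact hxy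
      set nn : ℝ := ‖x - y‖ with hnndef
      have hnD : nn ≤ D := hdistub x hx y hyΩ
      have hδy : η ≤ infDist y Ωᶜ := hKδ y hyK
      -- real-number estimate
      have hA : C * δx ≤ c₁ * (nn ^ (2 - (d : ℝ))
          * min 1 (δx / nn) * min 1 (infDist y Ωᶜ / nn)) * η := by
        have h1 : D ^ (2 - (d : ℝ)) ≤ nn ^ (2 - (d : ℝ)) :=
          Real.rpow_le_rpow_of_nonpos hnpos hnD hexp
        have h2 : δx / D ≤ min 1 (δx / nn) := by
          apply le_min
          · rw [div_le_one hD]; exact hδub x hx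
          · exact div_le_div_of_nonneg_left hδx.le hnpos hnD
        have h3 : min 1 (η / D) ≤ min 1 (infDist y Ωᶜ / nn) := by
          apply min_le_min le_rfl
          exact div_le_div₀ (le_trans hη.le hδy) hδy hnpos hnD
        have key : D ^ (2 - (d : ℝ)) * (δx / D) * min 1 (η / D) ≤
            nn ^ (2 - (d : ℝ)) * min 1 (δx / nn) * min 1 (infDist y Ωᶜ / nn) := by
          apply mul_le_mul _ h3 hminpos.le (by positivity)
          apply mul_le_mul h1 h2 (by positivity) (by positivity)
        have : C * δx = c₁ * (D ^ (2 - (d : ℝ)) * (δx / D) * min 1 (η / D)) * η := by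
          rw [hCdef]; field_simp
        rw [this]
        have := mul_le_mul_of_nonneg_left key hc₁.le
        exact mul_le_mul_of_nonneg_right this hη.le
      calc ENNReal.ofReal (C * δx)
          ≤ ENNReal.ofReal (c₁ * (nn ^ (2 - (d : ℝ))
              * min 1 (δx / nn) * min 1 (infDist y Ωᶜ / nn)) * η) :=
            ENNReal.ofReal_le_ofReal hA
        _ = ENNReal.ofReal (c₁ * (nn ^ (2 - (d : ℝ))
              * min 1 (δx / nn) * min 1 (infDist y Ωᶜ / nn))) * ENNReal.ofReal η := by
            have hnn0 : (0:ℝ) ≤ nn := hnpos.le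
            refine ENNReal.ofReal_mul ?_
            refine mul_nonneg hc₁.le (mul_nonneg (mul_nonneg (Real.rpow_nonneg hnn0 _) ?_) ?_)
            · exact le_min zero_le_one (div_nonneg hδx.le hnn0)
            · exact le_min zero_le_one (div_nonneg ((hδpos y hyΩ).le) hnn0)
        _ ≤ G x y * ENNReal.ofReal (F y) := by
            apply mul_le_mul'
            · exact (hG x hx y hyΩ hxy).1
            · exact ENNReal.ofReal_le_ofReal (hKF y hyK)
    · rw [Set.indicator_of_notMem hy]
      exact zero_le
  -- integral bound
  haveI : Nonempty (Fin d) := ⟨⟨0, hd0⟩⟩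
  haveI : NullSingletonClass (volume : Measure (EuclideanSpace ℝ (Fin d))) := by infer_instance
  have hind : ∫⁻ y in Ω, (K \ {x}).indicator (fun _ => ENNReal.ofReal (C * δx)) y =
      ENNReal.ofReal (C * δx) * volume K := by
    rw [lintegral_indicator (hKmeas.diff (measurableSet_singleton x)),
      setLIntegral_const, Measure.restrict_apply (hKmeas.diff (measurableSet_singleton x)),
      Set.inter_eq_left.mpr ((Set.diff_subset).trans hKsub),
      measure_diff_null (measure_singleton x)]
  calc ENNReal.ofReal (C * v * δx)
      = ENNReal.ofReal (C * δx) * ENNReal.ofReal v := by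
        rw [← ENNReal.ofReal_mul (by positivity)]; ring_nf
    _ = ENNReal.ofReal (C * δx) * volume K := by
        rw [hvdef, ENNReal.ofReal_toReal hKfin.ne]
    _ = ∫⁻ y in Ω, (K \ {x}).indicator (fun _ => ENNReal.ofReal (C * δx)) y := hind.symm
    _ ≤ ∫⁻ y in Ω, G x y * ENNReal.ofReal (F y) := lintegral_mono hpt
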